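/- For each t ∈ [1,n], the boxes of T(∞) carrying the entry t form a profile staircase: there is a consecutive interval of columns, beginning with the column containing b(t), such that t occurs exactly once in each of these columns and in no other column, and the row indices of these occurrences weakly increase from each column to the next, increasing by at most one at each step, starting from the row of b(t). In particular, if t occurs in column C_u of T and in column C_v of T(∞), then t occurs in every column C_i with u ≤ i ≤ v of T(∞). -/

import Mathlib

open scoped Classical

/-- height of column `j` of the diagram (columns numbered from 1). -/
def hgt (c : List ℕ) (j : ℕ) : ℕ := c.getD (j - 1) 0

/-- number of boxes in the columns strictly to the left of column `j`. -/
def off (c : List ℕ) (j : ℕ) : ℕ := (c.take (j - 1)).sum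

/-- `(i, j)` (row `i`, column `j`) is a box of the diagram `D`. -/
def IsBox (c : List ℕ) (i j : ℕ) : Prop :=
  1 ≤ j ∧ j ≤ c.length ∧ 1 ≤ i ∧ i ≤ hgt c j

/-- the entry of the box `(i, j)` in the tableau `T`. -/
def Tentry (c : List ℕ) (i j : ℕ) : ℕ := off c j + i

/-- the column of the box of `D` carrying entry `m` in `T`. -/
noncomputable def colOf (c : List ℕ) (m : ℕ) : ℕ := sInf {j | m ≤ (c.take j).sum}

/-- the row of the box of `D` carrying entry `m` in `T`. -/
noncomputable def rowOf (c : List ℕ) (m : ℕ) : ℕ := m - off c (colOf c m)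

/-- the total order `≼` on entries: increasing down columns, then from right to left. -/
def ple (c : List ℕ) (a b : ℕ) : Prop :=
  colOf c b < colOf c a ∨ (colOf c a = colOf c b ∧ a ≤ b)

/-- the strict version of `≼`. -/
def plt (c : List ℕ) (a b : ℕ) : Prop :=
  colOf c b < colOf c a ∨ (colOf c a = colOf c b ∧ a < b)

/-- column `j` has a left neighbour in `D`. -/
def HasLeftNb (c : List ℕ) (j : ℕ) : Prop :=
  ∃ i, 1 ≤ i ∧ i < j ∧ hgt c i = hgt c j ∧
    ∀ i', i < i' → i' < j → hgt c i' ≠ hgt c j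

/-- the `j`-th column of the tableau `T`, rows to optional entries. -/
def Tcol (c : List ℕ) (j : ℕ) : ℕ → Option ℕ := fun i =>
  if 1 ≤ i ∧ i ≤ hgt c j then some (Tentry c i j) else none

/-- one step of the propagation rule building `T(∞)`: the entry (if any) in row `t`
of column `j - 1` of `T(∞)` (given by `prev`) is propagated into the partially
built column `j` (given by `cur`). -/
noncomputable def propStep (c : List ℕ) (j : ℕ) (prev : ℕ → Option ℕ)
    (cur : ℕ → Option ℕ) (t : ℕ) : ℕ → Option ℕ :=
  match prev t with
  | none => cur
  | some l =>
    if hgt c j = t then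
      if HasLeftNb c j ∧ cur (t + 1) = none then
        Function.update cur (t + 1) (some l)
      else cur
    else
      if cur t = none then Function.update cur t (some l) else cur

/-- the `j`-th column of the composition tableau `T(∞)`. -/
noncomputable def TinfCol (c : List ℕ) : ℕ → ℕ → Option ℕ
  | 0 => fun _ => none
  | 1 => Tcol c 1
  | j + 2 =>
      (List.range (c.sum + 2)).foldl
        (propStep c (j + 2) (TinfCol c (j + 1))) (Tcol c (j + 2))

/-- labels of lines: `1` or `∗`. -/
inductive Lab : Type
  | one : Lab
  | star : Lab
deriving DecidableEq

/-- maximal height among the columns `1, …, j - 1`. -/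
def maxHgt (c : List ℕ) (j : ℕ) : ℕ := (c.take (j - 1)).foldr max 0

/-- the maximal column height of the diagram `D`. -/
def maxH (c : List ℕ) : ℕ := c.foldr max 0

/-- `LineB c a i j lab` : the line family `ℓ(D)` contains a line labelled `lab`
whose left end-point is the box of `D` carrying entry `a` in `T` and whose right
end-point is the box `(i, j)` (row `i` of column `C_j`). -/
def LineB (c : List ℕ) (a i j : ℕ) (lab : Lab) : Prop :=
  2 ≤ j ∧ j ≤ c.length ∧ 1 ≤ i ∧
    (match lab with
     | Lab.one =>
         (maxHgt c j < hgt c j ∧ i ≤ maxHgt c j + 1 ∧ TinfCol c (j - 1) i = some a)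
       ∨ (hgt c j ≤ maxHgt c j ∧ i + 1 ≤ hgt c j ∧ TinfCol c (j - 1) i = some a)
       ∨ (hgt c j ≤ maxHgt c j ∧ i = hgt c j ∧
           ¬(∃ j', 1 ≤ j' ∧ j' < j ∧ hgt c j' = hgt c j) ∧
           TinfCol c (j - 1) i = some a)
       ∨ (hgt c j ≤ maxHgt c j ∧ i = hgt c j ∧
           (∃ j', 1 ≤ j' ∧ j' < j ∧ hgt c j' = hgt c j) ∧
           TinfCol c (j - 1) (i + 1) = some a)
     | Lab.star =>
         hgt c j ≤ maxHgt c j ∧ i = hgt c j ∧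
           (∃ j', 1 ≤ j' ∧ j' < j ∧ hgt c j' = hgt c j) ∧
           TinfCol c (j - 1) i = some a)

/-- `LineE c a b lab` : `ℓ(D)` contains a line labelled `lab` joining the box of `D`
carrying entry `a` in `T` (on the left) to the box carrying entry `b` (on the right). -/
def LineE (c : List ℕ) (a b : ℕ) (lab : Lab) : Prop :=
  ∃ i j, LineB c a i j lab ∧ b = Tentry c i j

/-- the box `(i, j)` of `D` is right extremal relative to `ℓ(D)`. -/
def RExt (c : List ℕ) (i j : ℕ) : Prop :=
  IsBox c i j ∧ ∀ i' j', ¬ LineB c (Tentry c i j) i' j' Lab.one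

/-- `c` is a composition of `n`. -/
def IsComposition (c : List ℕ) (n : ℕ) : Prop :=
  c.sum = n ∧ ∀ x ∈ c, 0 < x


namespace St2
variable (c : List ℕ)

lemma sum_take_succ (j : ℕ) : (c.take (j+1)).sum = (c.take j).sum + c.getD j 0 := by
  rw [List.take_succ, List.sum_append]
  cases hj : getElem? c j with
  | none =>
    have := List.getElem?_eq_none_iff.mp hj
    rw [List.getD_eq_default _ _ this]; simp [hj]
  | some x => simp [hj, List.getD_eq_getElem?_getD]

lemma take_sum_mono {a b : ℕ} (hab : a ≤ b) : (c.take a).sum ≤ (c.take b).sum := by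
  induction b with
  | zero => simp_all
  | succ b ih =>
    rcases Nat.lt_or_ge a (b+1) with h | h
    · calc (c.take a).sum ≤ (c.take b).sum := ih (by omega)
        _ ≤ _ := by rw [sum_take_succ]; omega
    · have : a = b + 1 := by omega
      subst this; rfl

lemma hgt_le_sum (j : ℕ) : hgt c j ≤ c.sum := by
  unfold hgt
  rcases lt_or_ge (j-1) c.length with h | h
  · rw [List.getD_eq_getElem?_getD, List.getElem?_eq_getElem h]
    simpa using List.single_le_sum (fun x _ => Nat.zero_le x) _ (c.getElem_mem h)
  · rw [List.getD_eq_default _ _ h]; exact Nat.zero_le _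

lemma colOf_spec {t : ℕ} (ht1 : 1 ≤ t) (htn : t ≤ c.sum) :
    1 ≤ colOf c t ∧ colOf c t ≤ c.length ∧ off c (colOf c t) < t ∧
      t ≤ off c (colOf c t) + hgt c (colOf c t) := by
  have hne : {j | t ≤ (c.take j).sum}.Nonempty := ⟨c.length, by simp [htn]⟩
  have hmem : t ≤ (c.take (colOf c t)).sum := Nat.sInf_mem hne
  have hle : colOf c t ≤ c.length := Nat.sInf_le (by simp [htn])
  have h1 : 1 ≤ colOf c t := by
    rcases Nat.eq_zero_or_pos (colOf c t) with h | h
    · rw [h] at hmem; simp at hmem; omega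
    · exact h
  have hlt : colOf c t - 1 < colOf c t := by omega
  have hnot : colOf c t - 1 ∉ {j | t ≤ (c.take j).sum} := Nat.notMem_of_lt_sInf hlt
  simp only [Set.mem_setOf_eq, not_le] at hnot
  refine ⟨h1, hle, by unfold off; omega, ?_⟩
  have h2 := sum_take_succ c (colOf c t - 1)
  have heq : colOf c t - 1 + 1 = colOf c t := by omega
  rw [heq] at h2
  unfold off hgt
  omega

lemma hgt_pos {j : ℕ} (hc : ∀ x ∈ c, 0 < x) (h1 : 1 ≤ j) (h2 : j ≤ c.length) :
    1 ≤ hgt c j := by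
  unfold hgt
  have h : j - 1 < c.length := by omega
  rw [List.getD_eq_getElem?_getD, List.getElem?_eq_getElem h]
  exact hc _ (c.getElem_mem h)

lemma off_succ (j : ℕ) : off c (j+1) = (c.take j).sum := rfl

lemma hgt_succ (j : ℕ) : hgt c (j+1) = c.getD j 0 := rfl

lemma take_colOf_sum {t : ℕ} (ht1 : 1 ≤ t) (htn : t ≤ c.sum) :
    t ≤ (c.take (colOf c t)).sum := by
  obtain ⟨h1, _, _, h4⟩ := colOf_spec c ht1 htn
  have h2 := sum_take_succ c (colOf c t - 1)
  have heq : colOf c t - 1 + 1 = colOf c t := by omega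
  rw [heq] at h2
  unfold off hgt at h4
  omega

noncomputable def Gspec (c : List ℕ) (j : ℕ) (prev : ℕ → Option ℕ) (m i : ℕ) : Option ℕ :=
  if 1 ≤ i ∧ i ≤ hgt c j then some (off c j + i)
  else if i = hgt c j + 1 then
    (if hgt c j < m then
      (if HasLeftNb c j ∧ prev (hgt c j) ≠ none then prev (hgt c j)
       else if hgt c j + 1 < m then prev (hgt c j + 1) else none)
     else none)
  else if hgt c j + 2 ≤ i ∧ i < m then prev i
  else none

variable {j : ℕ} {prev : ℕ → Option ℕ}

lemma propStep_none {t : ℕ} (h : prev t = none) (cur : ℕ → Option ℕ) :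
    propStep c j prev cur t = cur := by
  simp [propStep, h]

lemma propStep_some {t : ℕ} {l : ℕ} (h : prev t = some l) (cur : ℕ → Option ℕ) :
    propStep c j prev cur t =
      if hgt c j = t then
        (if HasLeftNb c j ∧ cur (t + 1) = none then Function.update cur (t + 1) (some l)
         else cur)
      else (if cur t = none then Function.update cur t (some l) else cur) := by
  simp [propStep, h]

set_option maxHeartbeats 3000000 in
lemma fold_eq (h0 : prev 0 = none) :
    ∀ m, (List.range m).foldl (propStep c j prev) (Tcol c j) = Gspec c j prev m := by
  intro m
  induction m with
  | zero =>
    funext i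
    simp only [List.range_zero, List.foldl_nil, Tcol, Tentry, Gspec]
    split_ifs <;> first | rfl | omega
  | succ m ih =>
    rw [List.range_succ, List.foldl_append, List.foldl_cons, List.foldl_nil, ih]
    clear ih
    have hm0 : prev m ≠ none → m ≠ 0 := by
      intro h hm; rw [hm, h0] at h; exact h rfl
    cases hpm : prev m with
    | none =>
      rw [propStep_none c hpm]
      funext i
      simp only [Gspec]
      split_ifs <;>
        first
          | rfl
          | omega
          | tauto
          | (simp_all; done)
          | (simp_all [show hgt c j + 1 = m from by omega]; done)
          | (simp_all [show hgt c j = m from by omega]; done)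
          | (simp_all [show i = m from by omega]; done)
    | some l =>
      have hm1 : 1 ≤ m := Nat.one_le_iff_ne_zero.mpr (hm0 (by rw [hpm]; simp))
      rw [propStep_some c hpm]
      funext i
      simp only [apply_ite (fun f : ℕ → Option ℕ => f i), ite_apply, Function.update_apply]
      simp only [Gspec]
      split_ifs <;>
        first
          | rfl
          | omega
          | tauto
          | (simp_all; done)
          | (simp_all [show hgt c j + 1 = m from by omega]; done)
          | (simp_all [show hgt c j = m from by omega]; done)
          | (simp_all [show i = m from by omega]; done)
          | (simp_all [show i = m + 1 from by omega]; done)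
          | (simp_all [show i = hgt c j + 1 from by omega]; done)


lemma step_formula' (k : ℕ)
    (h0 : TinfCol c (k+1) 0 = none)
    (hbd : ∀ i, c.sum + 1 < i → TinfCol c (k+1) i = none)
    (hh : hgt c (k+2) ≤ c.sum) (i : ℕ) :
    TinfCol c (k+2) i =
      if 1 ≤ i ∧ i ≤ hgt c (k+2) then some (off c (k+2) + i)
      else if i = hgt c (k+2) + 1 then
        (if HasLeftNb c (k+2) ∧ TinfCol c (k+1) (hgt c (k+2)) ≠ none
         then TinfCol c (k+1) (hgt c (k+2)) else TinfCol c (k+1) (hgt c (k+2) + 1))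
      else if hgt c (k+2) + 2 ≤ i then TinfCol c (k+1) i
      else none := by
  have hrw : TinfCol c (k+2) = Gspec c (k+2) (TinfCol c (k+1)) (c.sum+2) := by
    show (List.range (c.sum + 2)).foldl
        (propStep c (k + 2) (TinfCol c (k + 1))) (Tcol c (k + 2)) = _
    rw [fold_eq c h0]
  rw [hrw]
  simp only [Gspec]
  split_ifs <;>
    first
      | rfl
      | omega
      | tauto
      | (exact (hbd i (by omega)))
      | (exact (hbd i (by omega)).symm)

lemma step_formula {j : ℕ} (hj : 1 ≤ j)
    (h0 : TinfCol c j 0 = none)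
    (hbd : ∀ i, c.sum + 1 < i → TinfCol c j i = none)
    (hh : hgt c (j+1) ≤ c.sum) (i : ℕ) :
    TinfCol c (j+1) i =
      if 1 ≤ i ∧ i ≤ hgt c (j+1) then some (off c (j+1) + i)
      else if i = hgt c (j+1) + 1 then
        (if HasLeftNb c (j+1) ∧ TinfCol c j (hgt c (j+1)) ≠ none
         then TinfCol c j (hgt c (j+1)) else TinfCol c j (hgt c (j+1) + 1))
      else if hgt c (j+1) + 2 ≤ i then TinfCol c j i
      else none := by
  obtain ⟨k, rfl⟩ : ∃ k, j = k + 1 := ⟨j - 1, by omega⟩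
  exact step_formula' c k h0 hbd hh i

/-- inversion of the step formula -/
lemma step_inv {j i a : ℕ} (hj : 1 ≤ j)
    (h0 : TinfCol c j 0 = none)
    (hbd : ∀ i, c.sum + 1 < i → TinfCol c j i = none)
    (hh : hgt c (j+1) ≤ c.sum)
    (h : TinfCol c (j+1) i = some a) :
    (1 ≤ i ∧ i ≤ hgt c (j+1) ∧ a = off c (j+1) + i) ∨
    (i = hgt c (j+1) + 1 ∧ (TinfCol c j (hgt c (j+1)) = some a ∨
        TinfCol c j (hgt c (j+1) + 1) = some a)) ∨
    (hgt c (j+1) + 2 ≤ i ∧ TinfCol c j i = some a) := by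
  rw [step_formula c hj h0 hbd hh i] at h
  split_ifs at h with h1 h2 h3 h4
  · exact Or.inl ⟨h1.1, h1.2, (Option.some_inj.mp h).symm⟩
  · exact Or.inr (Or.inl ⟨h2, Or.inl h⟩)
  · exact Or.inr (Or.inl ⟨h2, Or.inr h⟩)
  · exact Or.inr (Or.inr ⟨h4, h⟩)

def Inv (c : List ℕ) (j : ℕ) : Prop :=
  (∀ i a, TinfCol c j i = some a → a ≤ (c.take j).sum) ∧
  (TinfCol c j 0 = none) ∧
  (∀ i, c.sum + 1 < i → TinfCol c j i = none) ∧
  (∀ a i i', TinfCol c j i = some a → TinfCol c j i' = some a → i = i') ∧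
  (∀ i, 1 ≤ i → i ≤ hgt c j → TinfCol c j i = some (off c j + i))

lemma TinfCol_one : TinfCol c 1 = Tcol c 1 := rfl

lemma inv_one : Inv c 1 := by
  have hone : ∀ i, TinfCol c 1 i =
      if 1 ≤ i ∧ i ≤ hgt c 1 then some (off c 1 + i) else none := fun i => rfl
  have hoff : off c 1 = 0 := by simp [off]
  have hsum : (c.take 1).sum = c.getD 0 0 := by
    have := sum_take_succ c 0; simpa using this
  have hhgt : hgt c 1 = c.getD 0 0 := rfl
  refine ⟨?_, ?_, ?_, ?_, ?_⟩
  · intro i a h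
    rw [hone i] at h
    split_ifs at h with h1
    · have := Option.some_inj.mp h
      omega
  · rw [hone 0]; simp
  · intro i hi
    have := hgt_le_sum c 1
    rw [hone i]
    rw [if_neg (by omega)]
  · intro a i i' h h'
    rw [hone i] at h; rw [hone i'] at h'
    split_ifs at h h' with h1 h2
    · have := Option.some_inj.mp h; have := Option.some_inj.mp h'; omega
    all_goals simp_all
  · intro i h1 h2
    rw [hone i, if_pos ⟨h1, h2⟩]

lemma inv_succ {j : ℕ} (hc : ∀ x ∈ c, 0 < x) (hj : 1 ≤ j) (hj1 : j + 1 ≤ c.length)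
    (I : Inv c j) : Inv c (j+1) := by
  obtain ⟨I1, I2, I3, I4, I5⟩ := I
  have hh : hgt c (j+1) ≤ c.sum := hgt_le_sum c (j+1)
  have hh1 : 1 ≤ hgt c (j+1) := hgt_pos c hc (by omega) hj1
  have SF := step_formula c hj I2 I3 hh
  have SI := fun {i a} h => step_inv c (a := a) (i := i) hj I2 I3 hh h
  have hoff : off c (j+1) = (c.take j).sum := rfl
  have hsum : (c.take (j+1)).sum = (c.take j).sum + hgt c (j+1) := by
    rw [sum_take_succ]; rfl
  refine ⟨?_, ?_, ?_, ?_, ?_⟩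
  · intro i a h
    rcases SI h with ⟨hi1, hi2, rfl⟩ | ⟨hi, h | h⟩ | ⟨hi, h⟩ <;>
      first
        | omega
        | (have := I1 _ _ h; omega)
  · rw [SF 0, if_neg (by omega), if_neg (by omega), if_neg (by omega)]
  · intro i hi
    rw [SF i, if_neg (by omega), if_neg (by omega), if_pos (by omega)]
    exact I3 i hi
  · intro a i i' h h'
    have B : ∀ {x}, TinfCol c j x = some a → a ≤ (c.take j).sum := fun h => I1 _ _ h
    rcases SI h with ⟨hi1, hi2, rfl⟩ | ⟨hi, h | h⟩ | ⟨hi, h⟩ <;>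
      rcases SI h' with ⟨hi1', hi2', he'⟩ | ⟨hi', h' | h'⟩ | ⟨hi', h'⟩ <;>
        first
          | omega
          | (have := B h; omega)
          | (have := B h'; omega)
          | (have := I4 _ _ _ h h'; omega)
  · intro i h1 h2
    rw [SF i, if_pos ⟨h1, h2⟩]

lemma inv_all {j : ℕ} (hc : ∀ x ∈ c, 0 < x) (hj : 1 ≤ j) (hjl : j ≤ c.length) :
    Inv c j := by
  induction j with
  | zero => omega
  | succ j ih =>
    rcases Nat.eq_zero_or_pos j with rfl | hj0
    · exact inv_one c
    · exact inv_succ c hc hj0 hjl (ih (by omega) (by omega))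

/-- going back one column: any occurrence of `t` in column `j+1` comes from
an occurrence in column `j` in the same row or one row up. -/
lemma t_back {t j i : ℕ} (hc : ∀ x ∈ c, 0 < x) (ht1 : 1 ≤ t) (htn : t ≤ c.sum)
    (hu : colOf c t ≤ j) (hj1 : j + 1 ≤ c.length)
    (h : TinfCol c (j+1) i = some t) :
    ∃ ρ, TinfCol c j ρ = some t ∧ (i = ρ ∨ i = ρ + 1) := by
  have hj : 1 ≤ j := le_trans (colOf_spec c ht1 htn).1 hu
  obtain ⟨I1, I2, I3, I4, I5⟩ := inv_all c hc hj (by omega)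
  have hh : hgt c (j+1) ≤ c.sum := hgt_le_sum c (j+1)
  rcases step_inv c hj I2 I3 hh h with ⟨hi1, hi2, he⟩ | ⟨hi, h | h⟩ | ⟨hi, h⟩
  · exfalso
    have ht : t ≤ (c.take (colOf c t)).sum := take_colOf_sum c ht1 htn
    have : (c.take (colOf c t)).sum ≤ (c.take j).sum := take_sum_mono c hu
    have : off c (j+1) = (c.take j).sum := rfl
    omega
  · exact ⟨hgt c (j+1), h, Or.inr hi⟩
  · exact ⟨hgt c (j+1) + 1, h, Or.inl hi⟩
  · exact ⟨i, h, Or.inl rfl⟩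

/-- `t` does not occur strictly left of its column in `T`. -/
lemma t_not_left {t j i : ℕ} (hc : ∀ x ∈ c, 0 < x) (ht1 : 1 ≤ t) (htn : t ≤ c.sum)
    (hj : 1 ≤ j) (hju : j < colOf c t) :
    TinfCol c j i ≠ some t := by
  intro h
  have hjl : j ≤ c.length := le_trans (by omega) (colOf_spec c ht1 htn).2.1
  obtain ⟨I1, _, _, _, _⟩ := inv_all c hc hj hjl
  have h1 := I1 _ _ h
  have h2 : (c.take j).sum ≤ (c.take (colOf c t - 1)).sum := take_sum_mono c (by omega)
  have h3 : (c.take (colOf c t - 1)).sum < t := by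
    have := (colOf_spec c ht1 htn).2.2.1
    unfold off at this
    omega
  omega

/-- the column of `t` contains `t` exactly in row `rowOf c t`. -/
lemma col_u {t i : ℕ} (hc : ∀ x ∈ c, 0 < x) (ht1 : 1 ≤ t) (htn : t ≤ c.sum) :
    TinfCol c (colOf c t) i = some t ↔ i = rowOf c t := by
  obtain ⟨h1, h2, h3, h4⟩ := colOf_spec c ht1 htn
  obtain ⟨I1, I2, I3, I4, I5⟩ := inv_all c hc h1 h2
  have hrow : TinfCol c (colOf c t) (rowOf c t) = some t := by
    have := I5 (rowOf c t) (by unfold rowOf; omega) (by unfold rowOf; omega)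
    rw [this]
    unfold rowOf
    congr 1
    omega
  constructor
  · intro h
    exact I4 _ _ _ h hrow
  · intro h
    rw [h, hrow]

end St2

/-- for each `t ∈ [1, n]` the boxes of `T(∞)` carrying the entry `t`
form a profile staircase: a consecutive interval of columns starting at the column
of `b(t)`, with exactly one occurrence in each of those columns and in no others,
the row indices weakly increasing by at most one at each step, starting from the
row of `b(t)`.  In particular if `t` occurs in column `C_u` of `T` and in column
`C_v` of `T(∞)`, then it occurs in every column `C_i`, `u ≤ i ≤ v`, of `T(∞)`. -/
theorem statement2 (n : ℕ) (hn : 0 < n) (c : List ℕ) (hc : IsComposition c n) :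
    ∀ t, 1 ≤ t → t ≤ n →
      ∃ (v : ℕ) (r : ℕ → ℕ), colOf c t ≤ v ∧ v ≤ c.length ∧
        (∀ j, 1 ≤ j → j ≤ c.length →
          ((∃ i, TinfCol c j i = some t) ↔ colOf c t ≤ j ∧ j ≤ v)) ∧
        (∀ j, colOf c t ≤ j → j ≤ v → ∀ i, (TinfCol c j i = some t ↔ i = r j)) ∧
        r (colOf c t) = rowOf c t ∧
        (∀ j, colOf c t ≤ j → j < v → r j ≤ r (j + 1) ∧ r (j + 1) ≤ r j + 1) := by
  obtain ⟨hsum, hpos⟩ := hc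
  subst hsum
  intro t ht1 htn
  obtain ⟨hu1, hu2, hu3, hu4⟩ := St2.colOf_spec c ht1 htn
  set A := {j | colOf c t ≤ j ∧ j ≤ c.length ∧ ∃ i, TinfCol c j i = some t} with hA
  have huA : colOf c t ∈ A :=
    ⟨le_rfl, hu2, rowOf c t, (St2.col_u c hpos ht1 htn).mpr rfl⟩
  have hbdd : BddAbove A := ⟨c.length, fun j hj => hj.2.1⟩
  set v := sSup A with hv
  obtain ⟨hvu, hvl, hvex⟩ : v ∈ A := Nat.sSup_mem ⟨_, huA⟩ hbdd
  have huv : colOf c t ≤ v := le_csSup hbdd huA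
  have alive : ∀ d j, colOf c t ≤ j → j + d = v → ∃ i, TinfCol c j i = some t := by
    intro d
    induction d with
    | zero =>
      intro j hju hjv
      have : j = v := by omega
      rw [this]; exact hvex
    | succ d ih =>
      intro j hju hjv
      obtain ⟨i, hi⟩ := ih (j+1) (by omega) (by omega)
      have hj1 : j + 1 ≤ c.length := by omega
      obtain ⟨ρ, hρ, _⟩ := St2.t_back c hpos ht1 htn hju hj1 hi
      exact ⟨ρ, hρ⟩
  set r := fun j => sInf {i | TinfCol c j i = some t} with hr
  have hrmem : ∀ j, colOf c t ≤ j → j ≤ v → TinfCol c j (r j) = some t := by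
    intro j hju hjv
    obtain ⟨i, hi⟩ := alive (v - j) j hju (by omega)
    have hne : {i | TinfCol c j i = some t}.Nonempty := ⟨i, hi⟩
    exact Nat.sInf_mem hne
  have hrow_iff : ∀ j, colOf c t ≤ j → j ≤ v → ∀ i, (TinfCol c j i = some t ↔ i = r j) := by
    intro j hju hjv i
    have hj1 : 1 ≤ j := le_trans hu1 hju
    have hjl : j ≤ c.length := le_trans hjv hvl
    obtain ⟨_, _, _, I4, _⟩ := St2.inv_all c hpos hj1 hjl
    constructor
    · intro h; exact I4 _ _ _ h (hrmem j hju hjv)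
    · intro h; rw [h]; exact hrmem j hju hjv
  refine ⟨v, r, huv, hvl, ?_, hrow_iff, ?_, ?_⟩
  · intro j hj1 hjl
    constructor
    · rintro ⟨i, hi⟩
      have hju : colOf c t ≤ j := by
        by_contra hlt
        exact St2.t_not_left c hpos ht1 htn hj1 (by omega) hi
      exact ⟨hju, le_csSup hbdd ⟨hju, hjl, i, hi⟩⟩
    · rintro ⟨hju, hjv⟩
      exact alive (v - j) j hju (by omega)
  · exact (St2.col_u c hpos ht1 htn).mp (hrmem _ le_rfl huv)
  · intro j hju hjv
    have h1 := hrmem (j+1) (by omega) (by omega)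
    have hj1 : j + 1 ≤ c.length := by omega
    obtain ⟨ρ, hρ, hcase⟩ := St2.t_back c hpos ht1 htn hju hj1 h1
    have : ρ = r j := (hrow_iff j hju (by omega) ρ).mp hρ
    omega
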